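/- The inclusion map H^s → H^t for s > t is a compact operator, where H^s is the Hilbert space completion of finitely supported sequences on ℤⁿ under the norm ‖a‖_s² = ∑_m (1+|m|²)^s |a_m|². -/

import Mathlib

open Real MeasureTheory
open scoped ENNReal

/-- The Sobolev space `H^s` on `ℤⁿ`, realized as `L²` of the counting measure
weighted by `(1+|m|²)^s`. -/
noncomputable def sobolevMeasure (n : ℕ) (s : ℝ) : Measure (Fin n → ℤ) :=
  Measure.count.withDensity
    (fun m => ENNReal.ofReal ((1 + ∑ j : Fin n, (|(m j : ℝ)|) ^ 2) ^ s))

namespace Rellich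

variable {n : ℕ}

/-- The base `1 + |m|²`. -/
noncomputable def bse (m : Fin n → ℤ) : ℝ := 1 + ∑ j : Fin n, (|(m j : ℝ)|) ^ 2

lemma one_le_bse (m : Fin n → ℤ) : 1 ≤ bse m := by
  have : 0 ≤ ∑ j : Fin n, (|(m j : ℝ)|) ^ 2 :=
    Finset.sum_nonneg fun j _ => sq_nonneg _
  simp only [bse]; linarith

lemma bse_pos (m : Fin n → ℤ) : 0 < bse m := lt_of_lt_of_le one_pos (one_le_bse m)

lemma sobolev_def (n : ℕ) (s : ℝ) :
    sobolevMeasure n s = Measure.count.withDensity (fun m => ENNReal.ofReal (bse m ^ s)) := rfl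

lemma meas (A : Set (Fin n → ℤ)) : MeasurableSet A := (Set.to_countable A).measurableSet

lemma sobolev_apply (s : ℝ) (A : Set (Fin n → ℤ)) :
    sobolevMeasure n s A = ∫⁻ m in A, ENNReal.ofReal (bse m ^ s) ∂Measure.count := by
  rw [sobolev_def, withDensity_apply _ (meas A)]

lemma sobolev_mono {s t : ℝ} (hts : t ≤ s) :
    sobolevMeasure n t ≤ sobolevMeasure n s := by
  refine Measure.le_iff.2 fun A _ => ?_
  rw [sobolev_apply, sobolev_apply]
  refine setLIntegral_mono (measurable_of_countable _) fun m _ => ?_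
  exact ENNReal.ofReal_le_ofReal
    (Real.rpow_le_rpow_of_exponent_le (one_le_bse m) hts)

lemma sobolev_singleton (s : ℝ) (m : Fin n → ℤ) :
    sobolevMeasure n s {m} = ENNReal.ofReal (bse m ^ s) := by
  rw [sobolev_apply, lintegral_singleton, Measure.count_singleton, mul_one]

lemma sobolev_singleton_pos (s : ℝ) (m : Fin n → ℤ) :
    0 < sobolevMeasure n s {m} := by
  rw [sobolev_singleton]
  exact ENNReal.ofReal_pos.2 (Real.rpow_pos_of_pos (bse_pos m) s)

/-- a.e. equality w.r.t. a Sobolev measure is equality. -/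
lemma eq_of_ae {s : ℝ} {α : Type*} {f g : (Fin n → ℤ) → α}
    (h : f =ᵐ[sobolevMeasure n s] g) : f = g := by
  funext m
  by_contra hm
  have h1 : sobolevMeasure n s {x | f x ≠ g x} = 0 := h
  have h2 : sobolevMeasure n s {m} ≤ sobolevMeasure n s {x | f x ≠ g x} :=
    measure_mono (by simpa using hm)
  exact absurd (le_antisymm (h1 ▸ h2) (zero_le)) (sobolev_singleton_pos s m).ne'

lemma memIncl {s t : ℝ} (hts : t ≤ s) (B : Set (Fin n → ℤ))
    (f : Lp ℂ 2 (sobolevMeasure n s)) :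
    MemLp (B.indicator ⇑f) 2 (sobolevMeasure n t) :=
  ((Lp.memLp f).mono_measure (sobolev_mono hts)).indicator (meas B)

/-- The inclusion (composed with a cutoff to `B`) as a linear map. -/
noncomputable def inclSet {s t : ℝ} (hts : t ≤ s) (B : Set (Fin n → ℤ)) :
    Lp ℂ 2 (sobolevMeasure n s) →ₗ[ℂ] Lp ℂ 2 (sobolevMeasure n t) where
  toFun f := (memIncl hts B f).toLp (B.indicator f)
  map_add' f g := by
    rw [← MemLp.toLp_add]
    refine MemLp.toLp_congr _ _ (Filter.EventuallyEq.of_eq ?_)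
    have h : ⇑(f + g) = ⇑f + ⇑g := eq_of_ae (Lp.coeFn_add f g)
    rw [h]
    funext x
    by_cases hx : x ∈ B <;> simp [Set.indicator_of_mem, Set.indicator_of_notMem, hx]
  map_smul' c f := by
    rw [← MemLp.toLp_const_smul]
    refine MemLp.toLp_congr _ _ (Filter.EventuallyEq.of_eq ?_)
    have h : ⇑(c • f) = c • ⇑f := eq_of_ae (Lp.coeFn_smul c f)
    rw [h]
    funext x
    by_cases hx : x ∈ B <;> simp [Set.indicator_of_mem, Set.indicator_of_notMem, hx]

lemma inclSet_apply {s t : ℝ} (hts : t ≤ s) (B : Set (Fin n → ℤ))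
    (f : Lp ℂ 2 (sobolevMeasure n s)) :
    (inclSet hts B f : (Fin n → ℤ) → ℂ) = B.indicator f := by
  show ((memIncl hts B f).toLp (B.indicator ⇑f) : (Fin n → ℤ) → ℂ) = B.indicator ⇑f
  exact eq_of_ae (MemLp.coeFn_toLp _)

lemma inclSet_norm_le {s t : ℝ} (hts : t ≤ s) (B : Set (Fin n → ℤ))
    (c : ℝ≥0∞) (hc : c ≠ ⊤)
    (hB : (sobolevMeasure n t).restrict B ≤ c • sobolevMeasure n s)
    (f : Lp ℂ 2 (sobolevMeasure n s)) :
    ‖inclSet hts B f‖ ≤ (c ^ (2:ℝ)⁻¹).toReal * ‖f‖ := by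
  have happ : inclSet hts B f = (memIncl hts B f).toLp (B.indicator ⇑f) := rfl
  rw [happ, Lp.norm_toLp, eLpNorm_indicator_eq_eLpNorm_restrict (meas B)]
  have h1 : eLpNorm (⇑f) 2 ((sobolevMeasure n t).restrict B)
      ≤ eLpNorm (⇑f) 2 (c • sobolevMeasure n s) := eLpNorm_mono_measure _ hB
  rw [eLpNorm_smul_measure_of_ne_top (by norm_num : (2:ℝ≥0∞) ≠ ∞)] at h1
  have h2 : ((1 : ℝ≥0∞) / 2).toReal = (2:ℝ)⁻¹ := by
    rw [one_div, ← ENNReal.ofReal_ofNat, ← ENNReal.ofReal_inv_of_pos (by norm_num)]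
    · rw [ENNReal.toReal_ofReal]; norm_num
  rw [h2, smul_eq_mul] at h1
  calc (eLpNorm (⇑f) 2 ((sobolevMeasure n t).restrict B)).toReal
      ≤ (c ^ (2:ℝ)⁻¹ * eLpNorm (⇑f) 2 (sobolevMeasure n s)).toReal := by
        refine ENNReal.toReal_mono ?_ h1
        exact ENNReal.mul_ne_top (by simp [ENNReal.rpow_eq_top_iff, hc]) (Lp.eLpNorm_ne_top f)
    _ = (c ^ (2:ℝ)⁻¹).toReal * ‖f‖ := by
        rw [ENNReal.toReal_mul, Lp.norm_def]

end Rellich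
namespace Rellich

variable {n : ℕ}

/-- The box of side `N`. -/
def AN (n N : ℕ) : Set (Fin n → ℤ) := {m | ∀ j, |m j| ≤ (N : ℤ)}

lemma AN_finite (n N : ℕ) : (AN n N).Finite := by
  have h1 : AN n N ⊆ Set.pi Set.univ (fun _ : Fin n => {x : ℤ | |x| ≤ (N : ℤ)}) := by
    intro m hm j _
    exact hm j
  refine Set.Finite.subset (Set.Finite.pi fun j => ?_) h1
  have : {x : ℤ | |x| ≤ (N : ℤ)} = Set.Icc (-(N:ℤ)) N := by
    ext x; simp [abs_le]
  rw [this]; exact Set.finite_Icc _ _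

lemma bse_large {N : ℕ} {m : Fin n → ℤ} (hm : m ∈ (AN n N)ᶜ) :
    1 + ((N : ℝ) + 1) ^ 2 ≤ bse m := by
  simp only [Set.mem_compl_iff, AN, Set.mem_setOf_eq, not_forall, not_le] at hm
  obtain ⟨j, hj⟩ := hm
  have h1 : (N : ℤ) + 1 ≤ |m j| := hj
  have h2 : ((N : ℝ) + 1) ≤ |(m j : ℝ)| := by
    have : (((N : ℤ) + 1 : ℤ) : ℝ) ≤ ((|m j| : ℤ) : ℝ) := Int.cast_le.2 h1
    push_cast at this
    simpa [Int.cast_abs] using this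
  have h3 : ((N : ℝ) + 1) ^ 2 ≤ (|(m j : ℝ)|) ^ 2 := by
    have hN : (0:ℝ) ≤ (N:ℝ) + 1 := by positivity
    exact pow_le_pow_left₀ hN h2 2
  have h4 : (|(m j : ℝ)|) ^ 2 ≤ ∑ i : Fin n, (|(m i : ℝ)|) ^ 2 :=
    Finset.single_le_sum (f := fun i => (|(m i : ℝ)|) ^ 2) (fun i _ => sq_nonneg _)
      (Finset.mem_univ j)
  simp only [bse]
  linarith

lemma tail_bound {s t : ℝ} (hts : t ≤ s) (N : ℕ) :
    (sobolevMeasure n t).restrict (AN n N)ᶜ ≤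
      ENNReal.ofReal ((1 + ((N : ℝ) + 1) ^ 2) ^ (t - s)) • sobolevMeasure n s := by
  set RN : ℝ := 1 + ((N : ℝ) + 1) ^ 2 with hRN
  have hRNpos : 0 < RN := by positivity
  refine Measure.le_iff.2 fun E hE => ?_
  rw [Measure.restrict_apply hE, Measure.smul_apply, smul_eq_mul, sobolev_apply, sobolev_apply]
  have key : ∀ m ∈ E ∩ (AN n N)ᶜ,
      ENNReal.ofReal (bse m ^ t) ≤
        ENNReal.ofReal (RN ^ (t - s)) * ENNReal.ofReal (bse m ^ s) := by
    intro m hm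
    rw [← ENNReal.ofReal_mul (by positivity)]
    refine ENNReal.ofReal_le_ofReal ?_
    have h1 : bse m ^ t = bse m ^ (t - s) * bse m ^ s := by
      rw [← Real.rpow_add (bse_pos m)]; ring_nf
    have h2 : bse m ^ (t - s) ≤ RN ^ (t - s) :=
      Real.rpow_le_rpow_of_nonpos hRNpos (bse_large hm.2) (by linarith)
    rw [h1]
    have h3 : (0:ℝ) ≤ bse m ^ s := (Real.rpow_pos_of_pos (bse_pos m) s).le
    exact mul_le_mul_of_nonneg_right h2 h3
  calc ∫⁻ m in E ∩ (AN n N)ᶜ, ENNReal.ofReal (bse m ^ t) ∂Measure.count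
      ≤ ∫⁻ m in E ∩ (AN n N)ᶜ,
          ENNReal.ofReal (RN ^ (t - s)) * ENNReal.ofReal (bse m ^ s) ∂Measure.count :=
        setLIntegral_mono (measurable_of_countable _) key
    _ ≤ ∫⁻ m in E, ENNReal.ofReal (RN ^ (t - s)) * ENNReal.ofReal (bse m ^ s) ∂Measure.count :=
        lintegral_mono_set Set.inter_subset_left
    _ = ENNReal.ofReal (RN ^ (t - s)) * ∫⁻ m in E, ENNReal.ofReal (bse m ^ s) ∂Measure.count :=
        lintegral_const_mul _ (measurable_of_countable _)

/-- A continuous linear map with range inside a finite-dimensional submodule is compact. -/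
lemma compact_of_range_le {E F : Type*} [NormedAddCommGroup E] [NormedSpace ℂ E]
    [NormedAddCommGroup F] [NormedSpace ℂ F] (T : E →L[ℂ] F) (V : Submodule ℂ F)
    [FiniteDimensional ℂ V] (hT : ∀ x, T x ∈ V) : IsCompactOperator T := by
  refine ⟨Subtype.val '' Metric.closedBall (0 : V) ‖T‖,
    ((isCompact_closedBall _ _).image continuous_subtype_val), ?_⟩
  refine Filter.mem_of_superset (Metric.closedBall_mem_nhds (0 : E) one_pos) ?_
  intro x hx
  refine ⟨⟨T x, hT x⟩, ?_, rfl⟩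
  rw [Metric.mem_closedBall, dist_zero_right]
  show ‖T x‖ ≤ ‖T‖
  calc ‖T x‖ ≤ ‖T‖ * ‖x‖ := T.le_opNorm x
    _ ≤ ‖T‖ * 1 := by
        refine mul_le_mul_of_nonneg_left ?_ (norm_nonneg _)
        rwa [Metric.mem_closedBall, dist_zero_right] at hx
    _ = ‖T‖ := mul_one _

lemma coe_sum {s : ℝ} {ι : Type*} (sf : Finset ι) (v : ι → Lp ℂ 2 (sobolevMeasure n s)) :
    ⇑(∑ i ∈ sf, v i) = ∑ i ∈ sf, ⇑(v i) := by
  classical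
  induction sf using Finset.induction_on with
  | empty => simpa using eq_of_ae (Lp.coeFn_zero ℂ 2 (sobolevMeasure n s))
  | insert _ _ hi ih =>
    rw [Finset.sum_insert hi, Finset.sum_insert hi, ← ih]
    exact eq_of_ae (Lp.coeFn_add _ _)

lemma coe_smul {s : ℝ} (c : ℂ) (f : Lp ℂ 2 (sobolevMeasure n s)) :
    ⇑(c • f) = c • ⇑f := eq_of_ae (Lp.coeFn_smul c f)

end Rellich
namespace Rellich

variable {n : ℕ}

/-- Delta function at `m` as an element of `H^t`. -/
noncomputable def delta (t : ℝ) (m : Fin n → ℤ) : Lp ℂ 2 (sobolevMeasure n t) :=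
  MemLp.toLp _ (memLp_indicator_const 2 (meas {m}) (1 : ℂ)
    (Or.inr (by rw [sobolev_singleton]; exact ENNReal.ofReal_ne_top)))

lemma coe_delta (t : ℝ) (m : Fin n → ℤ) :
    ⇑(delta (n := n) t m) = ({m} : Set (Fin n → ℤ)).indicator (fun _ => (1 : ℂ)) :=
  eq_of_ae (MemLp.coeFn_toLp _)

lemma trunc_mem_span {s t : ℝ} (hts : t ≤ s) (N : ℕ) (f : Lp ℂ 2 (sobolevMeasure n s)) :
    inclSet hts (AN n N) f ∈ Submodule.span ℂ (delta (n := n) t '' AN n N) := by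
  classical
  have hfin := AN_finite n N
  have key : inclSet hts (AN n N) f = ∑ m ∈ hfin.toFinset, (f m : ℂ) • delta t m := by
    apply Lp.ext (μ := sobolevMeasure n t)
    apply Filter.EventuallyEq.of_eq
    rw [inclSet_apply, coe_sum]
    funext x
    rw [Finset.sum_apply]
    have hterm : ∀ m ∈ hfin.toFinset,
        ⇑((f m : ℂ) • delta (n := n) t m) x = if x = m then f x else 0 := by
      intro m _
      rw [coe_smul, Pi.smul_apply, coe_delta, Set.indicator_apply]
      simp only [Set.mem_singleton_iff, smul_eq_mul]
      by_cases hx : x = m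
      · subst hx; simp
      · simp [hx]
    rw [Finset.sum_congr rfl hterm, Finset.sum_ite_eq]
    simp [Set.indicator_apply, Set.Finite.mem_toFinset]
  rw [key]
  refine Submodule.sum_mem _ fun m hm => Submodule.smul_mem _ _ ?_
  exact Submodule.subset_span ⟨m, (Set.Finite.mem_toFinset hfin).1 hm, rfl⟩

/-- The cutoff inclusion as a continuous linear map. -/
noncomputable def inclCLM {s t : ℝ} (hts : t ≤ s) (B : Set (Fin n → ℤ)) (c : ℝ≥0∞)
    (hc : c ≠ ⊤) (hB : (sobolevMeasure n t).restrict B ≤ c • sobolevMeasure n s) :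
    Lp ℂ 2 (sobolevMeasure n s) →L[ℂ] Lp ℂ 2 (sobolevMeasure n t) :=
  LinearMap.mkContinuous (inclSet hts B) ((c ^ (2:ℝ)⁻¹).toReal)
    (fun f => inclSet_norm_le hts B c hc hB f)

lemma inclCLM_apply {s t : ℝ} (hts : t ≤ s) (B : Set (Fin n → ℤ)) (c : ℝ≥0∞)
    (hc : c ≠ ⊤) (hB : (sobolevMeasure n t).restrict B ≤ c • sobolevMeasure n s)
    (f : Lp ℂ 2 (sobolevMeasure n s)) :
    inclCLM hts B c hc hB f = inclSet hts B f := rfl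

lemma full_bound {s t : ℝ} (hts : t ≤ s) :
    (sobolevMeasure n t).restrict Set.univ ≤ (1 : ℝ≥0∞) • sobolevMeasure n s := by
  rw [Measure.restrict_univ, one_smul]; exact sobolev_mono hts

lemma box_bound {s t : ℝ} (hts : t ≤ s) (N : ℕ) :
    (sobolevMeasure n t).restrict (AN n N) ≤ (1 : ℝ≥0∞) • sobolevMeasure n s :=
  le_trans Measure.restrict_le_self (by rw [one_smul]; exact sobolev_mono hts)

/-- The full inclusion operator `H^s → H^t`. -/
noncomputable def inclT {s t : ℝ} (hts : t ≤ s) :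
    Lp ℂ 2 (sobolevMeasure n s) →L[ℂ] Lp ℂ 2 (sobolevMeasure n t) :=
  inclCLM hts Set.univ 1 ENNReal.one_ne_top (full_bound hts)

/-- The truncated inclusion operators. -/
noncomputable def inclTN {s t : ℝ} (hts : t ≤ s) (N : ℕ) :
    Lp ℂ 2 (sobolevMeasure n s) →L[ℂ] Lp ℂ 2 (sobolevMeasure n t) :=
  inclCLM hts (AN n N) 1 ENNReal.one_ne_top (box_bound hts N)

lemma inclTN_compact {s t : ℝ} (hts : t ≤ s) (N : ℕ) :
    IsCompactOperator (inclTN (n := n) hts N) := by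
  haveI : FiniteDimensional ℂ (Submodule.span ℂ (delta (n := n) t '' AN n N)) :=
    FiniteDimensional.span_of_finite ℂ ((AN_finite n N).image _)
  exact compact_of_range_le (inclTN hts N) (Submodule.span ℂ (delta (n := n) t '' AN n N))
    (fun f => trunc_mem_span hts N f)

lemma sub_apply_eq {s t : ℝ} (hts : t ≤ s) (N : ℕ) (f : Lp ℂ 2 (sobolevMeasure n s)) :
    inclT (n := n) hts f - inclTN hts N f = inclSet hts (AN n N)ᶜ f := by
  apply Lp.ext (μ := sobolevMeasure n t)
  apply Filter.EventuallyEq.of_eq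
  have h1 : ⇑(inclT (n := n) hts f - inclTN hts N f)
      = ⇑(inclT (n := n) hts f) - ⇑(inclTN hts N f) := eq_of_ae (Lp.coeFn_sub _ _)
  rw [h1, inclSet_apply]
  have h2 : ⇑(inclT (n := n) hts f) = Set.univ.indicator ⇑f := inclSet_apply hts _ f
  have h3 : ⇑(inclTN (n := n) hts N f) = (AN n N).indicator ⇑f := inclSet_apply hts _ f
  rw [h2, h3, Set.indicator_univ, Set.indicator_compl]

lemma norm_sub_le {s t : ℝ} (hts : t ≤ s) (N : ℕ) :
    ‖inclT (n := n) hts - inclTN hts N‖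
      ≤ ((1 + ((N : ℝ) + 1) ^ 2) ^ (t - s)) ^ ((2:ℝ)⁻¹) := by
  set RN : ℝ := 1 + ((N : ℝ) + 1) ^ 2 with hRN
  have hpos : (0:ℝ) < RN ^ (t - s) := Real.rpow_pos_of_pos (by positivity) _
  refine ContinuousLinearMap.opNorm_le_bound _ (by positivity) fun f => ?_
  rw [ContinuousLinearMap.sub_apply, sub_apply_eq]
  have := inclSet_norm_le hts (AN n N)ᶜ (ENNReal.ofReal (RN ^ (t - s)))
    ENNReal.ofReal_ne_top (tail_bound hts N) f
  rwa [ENNReal.ofReal_rpow_of_pos hpos, ENNReal.toReal_ofReal (by positivity)] at this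

lemma tendsto_inclTN {s t : ℝ} (hst : t < s) :
    Filter.Tendsto (fun N => inclTN (n := n) hst.le N) Filter.atTop
      (nhds (inclT (n := n) hst.le)) := by
  rw [tendsto_iff_norm_sub_tendsto_zero]
  have hexp : ((t - s) * (2:ℝ)⁻¹) < 0 := by
    have h1 : t - s < 0 := by linarith
    have h2 : (0:ℝ) < (2:ℝ)⁻¹ := by norm_num
    exact mul_neg_of_neg_of_pos h1 h2
  have hb : ∀ N : ℕ, ‖inclTN (n := n) hst.le N - inclT (n := n) hst.le‖
      ≤ (1 + ((N : ℝ) + 1) ^ 2) ^ ((t - s) * (2:ℝ)⁻¹) := by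
    intro N
    rw [norm_sub_rev, Real.rpow_mul (by positivity)]
    exact norm_sub_le hst.le N
  refine squeeze_zero (fun N => norm_nonneg _) hb ?_
  have h1 : Filter.Tendsto (fun N : ℕ => (1 + ((N : ℝ) + 1) ^ 2)) Filter.atTop Filter.atTop := by
    refine Filter.tendsto_atTop_mono (fun N => ?_) tendsto_natCast_atTop_atTop
    have : (0:ℝ) ≤ (N:ℝ) := Nat.cast_nonneg N
    nlinarith
  have h2 : Filter.Tendsto (fun x : ℝ => x ^ ((t - s) * (2:ℝ)⁻¹)) Filter.atTop (nhds 0) := by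
    have := tendsto_rpow_neg_atTop (y := -((t - s) * (2:ℝ)⁻¹)) (by linarith)
    simpa using this
  exact h2.comp h1

end Rellich

open Rellich in
/-- The inclusion `H^s ↪ H^t` for `s > t` is a compact operator: there is a compact
continuous linear map `H^s → H^t` agreeing with the identity on finitely supported
sequences. -/
theorem rellich_compact_inclusion (n : ℕ) (s t : ℝ) (hst : t < s) :
    ∃ T : Lp ℂ 2 (sobolevMeasure n s) →L[ℂ] Lp ℂ 2 (sobolevMeasure n t),
      IsCompactOperator T ∧
      ∀ f : (Fin n → ℤ) → ℂ, (Function.support f).Finite →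
        ∀ (hfs : MemLp f 2 (sobolevMeasure n s)) (hft : MemLp f 2 (sobolevMeasure n t)),
          T (hfs.toLp f) = hft.toLp f := by
  refine ⟨inclT hst.le, ?_, ?_⟩
  · exact isCompactOperator_of_tendsto (tendsto_inclTN hst)
      (Filter.Eventually.of_forall fun N => inclTN_compact hst.le N)
  · intro f _ hfs hft
    apply Lp.ext (μ := sobolevMeasure n t)
    apply Filter.EventuallyEq.of_eq
    have h1 : ⇑(inclT (n := n) hst.le (hfs.toLp f)) = Set.univ.indicator ⇑(hfs.toLp f) :=
      inclSet_apply hst.le _ _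
    rw [h1, Set.indicator_univ, eq_of_ae (MemLp.coeFn_toLp hfs),
      eq_of_ae (MemLp.coeFn_toLp hft)]
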